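/- Let p be an odd natural number, let U ∈ ℝ^{n×r} and V ∈ ℝ^{r×d}, and suppose that at most m pairs (i,j) satisfy (UV)_{ij} < 0. Then the matrix M ∈ ℝ^{n×d} with entries M_{ij} = |(UV)_{ij}|^p has rank at most r^p + m. -/

import Mathlib

open Matrix

/-- Rank is subadditive for real matrices. -/
lemma matrix_rank_add_le {n d : ℕ} (A B : Matrix (Fin n) (Fin d) ℝ) :
    (A + B).rank ≤ A.rank + B.rank := by
  simp only [Matrix.rank]
  have h : LinearMap.range (A + B).mulVecLin ≤
      LinearMap.range A.mulVecLin ⊔ LinearMap.range B.mulVecLin := by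
    rintro x ⟨v, rfl⟩
    rw [Matrix.mulVecLin_add]
    exact Submodule.add_mem_sup ⟨v, rfl⟩ ⟨v, rfl⟩
  exact (Submodule.finrank_mono h).trans
    (Submodule.finrank_add_le_finrank_add_finrank _ _)

/-- A standard basis matrix has rank at most one. -/
lemma matrix_rank_stdBasisMatrix_le_one {n d : ℕ} (i : Fin n) (j : Fin d) (c : ℝ) :
    (Matrix.single i j c).rank ≤ 1 := by
  have : Matrix.single i j c =
      (Matrix.of fun a (_ : Fin 1) => if a = i then c else 0) *
      (Matrix.of fun (_ : Fin 1) b => if b = j then (1 : ℝ) else 0) := by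
    ext a b
    simp [Matrix.single, Matrix.mul_apply, ite_and]
    split_ifs <;> simp_all
  rw [this]
  exact (Matrix.rank_mul_le_left _ _).trans
    ((Matrix.rank_le_card_width _).trans (by simp))

lemma matrix_rank_sum_le {n d : ℕ} {ι : Type*} (s : Finset ι)
    (f : ι → Matrix (Fin n) (Fin d) ℝ) :
    (∑ x ∈ s, f x).rank ≤ ∑ x ∈ s, (f x).rank := by
  classical
  induction s using Finset.induction_on with
  | empty => simp [Matrix.rank_zero]
  | insert _ _ h ih =>
    rename_i a s
    rw [Finset.sum_insert h, Finset.sum_insert h]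
    exact (matrix_rank_add_le _ _).trans (add_le_add_right ih _)

/-- for odd p, if at most m entries of U·V are negative, then the
entrywise |·|^p transform of U·V has rank at most r^p + m. -/
theorem rank_abs_pow_le_of_few_negative
    (n r d p m : ℕ) (hp : Odd p)
    (U : Matrix (Fin n) (Fin r) ℝ) (V : Matrix (Fin r) (Fin d) ℝ)
    (hneg : {ij : Fin n × Fin d | (U * V) ij.1 ij.2 < 0}.ncard ≤ m)
    (M : Matrix (Fin n) (Fin d) ℝ) (hM : ∀ i j, M i j = |(U * V) i j| ^ p) :
    M.rank ≤ r ^ p + m := by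
  classical
  set S : Set (Fin n × Fin d) := {ij : Fin n × Fin d | (U * V) ij.1 ij.2 < 0} with hS
  have hSfin : S.Finite := Set.toFinite S
  -- The entrywise p-th power matrix
  set N : Matrix (Fin n) (Fin d) ℝ := Matrix.of fun i j => ((U * V) i j) ^ p with hN
  -- N has rank at most r^p: it factors as a product through (Fin p → Fin r)
  have hNrank : N.rank ≤ r ^ p := by
    have hfac : N =
        (Matrix.of fun i (f : Fin p → Fin r) => ∏ t, U i (f t)) *
        (Matrix.of fun (f : Fin p → Fin r) j => ∏ t, V (f t) j) := by
      ext i j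
      simp only [hN, Matrix.of_apply, Matrix.mul_apply]
      rw [Fintype.sum_pow (fun k => U i k * V k j) p]
      congr 1
      ext f
      rw [Finset.prod_mul_distrib]
    rw [hfac]
    refine (Matrix.rank_mul_le_left _ _).trans ?_
    refine (Matrix.rank_le_card_width _).trans ?_
    simp [Fintype.card_fun]
  -- The correction matrix E, supported on S
  set E : Matrix (Fin n) (Fin d) ℝ := M - N with hE
  have hEs : ∀ i j, (i, j) ∉ S → E i j = 0 := by
    intro i j hij
    simp only [hS, Set.mem_setOf_eq, not_lt] at hij
    simp only [hE, Matrix.sub_apply, hM i j, hN, Matrix.of_apply]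
    rw [abs_of_nonneg hij]
    ring
  have hErank : E.rank ≤ m := by
    have hEexp : E = ∑ ij ∈ hSfin.toFinset, Matrix.single ij.1 ij.2 (E ij.1 ij.2) := by
      ext i j
      rw [Matrix.sum_apply]
      by_cases hij : (i, j) ∈ S
      · rw [Finset.sum_eq_single (i, j)]
        · simp [Matrix.single]
        · rintro ⟨a, b⟩ _ hab
          simp only [Matrix.single, Matrix.of_apply]
          rw [if_neg]
          rintro ⟨rfl, rfl⟩
          exact hab rfl
        · intro h
          exact absurd (hSfin.mem_toFinset.mpr hij) h
      · rw [hEs i j hij]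
        rw [Finset.sum_eq_zero]
        rintro ⟨a, b⟩ hab
        simp only [Matrix.single, Matrix.of_apply]
        split_ifs with h
        · obtain ⟨rfl, rfl⟩ := h
          exact hEs a b hij
        · rfl
    rw [hEexp]
    refine (matrix_rank_sum_le _ _).trans ?_
    calc ∑ ij ∈ hSfin.toFinset, (Matrix.single ij.1 ij.2 (E ij.1 ij.2)).rank
        ≤ ∑ _ij ∈ hSfin.toFinset, 1 :=
          Finset.sum_le_sum fun ij _ => matrix_rank_stdBasisMatrix_le_one _ _ _
      _ = hSfin.toFinset.card := by simp
      _ ≤ m := by rwa [Set.ncard_eq_toFinset_card S hSfin] at hneg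
  have hMsplit : M = N + E := by simp [hE]
  rw [hMsplit]
  exact (matrix_rank_add_le N E).trans (add_le_add hNrank hErank)
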